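/- Let m ≥ 1, k ≥ 1, and let A be a real symmetric m×m matrix. Let Q be a random m×k matrix whose entries are independent standard normal N(0,1) random variables. Then E[Q Qᵀ A Q Qᵀ] = k(k+1)·A + k·(tr A)·I, where I is the m×m identity matrix. -/

import Mathlib

open Matrix MeasureTheory ProbabilityTheory Real Set
open scoped ENNReal NNReal


open Matrix MeasureTheory ProbabilityTheory Real Set

noncomputable def Gm (n : ℕ) : ℝ := ∫ x : ℝ, x ^ n * rexp (-2⁻¹ * x ^ 2)

lemma integrable_pow_mul_gauss (n : ℕ) :
    Integrable fun x : ℝ => x ^ n * rexp (-2⁻¹ * x ^ 2) := by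
  have hb : (0:ℝ) < 2⁻¹ := by norm_num
  have hs : (-1:ℝ) < (n:ℝ) := by
    have : (0:ℝ) ≤ n := Nat.cast_nonneg n
    linarith
  have h : IntegrableOn (fun x : ℝ => x ^ n * rexp (-2⁻¹ * x ^ 2)) (Ioi 0) := by
    have h0 := integrableOn_rpow_mul_exp_neg_mul_sq hb hs
    refine h0.congr_fun (fun x hx => ?_) measurableSet_Ioi
    simp only [Real.rpow_natCast]
  rw [← integrableOn_univ, ← Iic_union_Ioi (a := (0:ℝ)), integrableOn_union]
  refine ⟨?_, h⟩
  have A : MeasurableEmbedding fun x : ℝ => -x :=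
    (Homeomorph.neg ℝ).measurableEmbedding
  rw [← Measure.map_neg_eq_self (volume : Measure ℝ), A.integrableOn_map_iff]
  have e1 : ((fun x : ℝ => x ^ n * rexp (-2⁻¹ * x ^ 2)) ∘ fun x : ℝ => -x)
      = fun x : ℝ => (-1) ^ n * (x ^ n * rexp (-2⁻¹ * x ^ 2)) := by
    funext x
    rw [Function.comp_apply, neg_pow, neg_sq]
    ring
  have e2 : (fun x : ℝ => -x) ⁻¹' Iic 0 = Ici 0 := by
    ext x; simp
  rw [e1, e2, integrableOn_Ici_iff_integrableOn_Ioi]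
  exact h.const_mul _

lemma hasDerivAt_gauss (x : ℝ) :
    HasDerivAt (fun y : ℝ => rexp (-2⁻¹ * y ^ 2)) (-x * rexp (-2⁻¹ * x ^ 2)) x := by
  have h1 : HasDerivAt (fun y : ℝ => -2⁻¹ * y ^ 2) (-x) x := by
    have := (hasDerivAt_pow 2 x).const_mul (-2⁻¹ : ℝ)
    refine this.congr_deriv ?_
    norm_num
    ring
  have := h1.exp
  convert this using 1
  ring

lemma Gm_zero : Gm 0 = √(2 * π) := by
  have : Gm 0 = ∫ x : ℝ, rexp (-2⁻¹ * x ^ 2) := by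
    unfold Gm; congr 1; funext x; simp
  rw [this, integral_gaussian]
  rw [show π / 2⁻¹ = 2 * π by rw [div_eq_mul_inv, inv_inv, mul_comm]]

lemma Gm_one : Gm 1 = 0 := by
  have h := integral_mul_deriv_eq_deriv_mul_of_integrable
    (u := fun _ : ℝ => (1:ℝ)) (u' := fun _ : ℝ => (0:ℝ))
    (v := fun y : ℝ => rexp (-2⁻¹ * y ^ 2))
    (v' := fun x : ℝ => -x * rexp (-2⁻¹ * x ^ 2))
    (fun x _ => hasDerivAt_const x 1) (fun x _ => hasDerivAt_gauss x)
    ?_ ?_ ?_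
  · simp only [one_mul, zero_mul, integral_zero, neg_zero, neg_mul] at h
    rw [integral_neg] at h
    have h2 : (∫ x : ℝ, x * rexp (-(2⁻¹ * x ^ 2))) = 0 := neg_eq_zero.mp h
    unfold Gm
    rw [← h2]
    congr 1; funext x; rw [pow_one, neg_mul]
  · have e1 : ((fun _ : ℝ => (1:ℝ)) * fun x : ℝ => -x * rexp (-2⁻¹ * x ^ 2))
        = fun x : ℝ => -(x ^ 1 * rexp (-2⁻¹ * x ^ 2)) := by
      funext x; simp only [Pi.mul_apply]; ring
    rw [e1]
    exact (integrable_pow_mul_gauss 1).neg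
  · have e2 : ((fun _ : ℝ => (0:ℝ)) * fun y : ℝ => rexp (-2⁻¹ * y ^ 2)) = fun _ : ℝ => (0:ℝ) := by
      funext x; simp
    rw [e2]
    exact integrable_zero _ _ _
  · have e3 : ((fun _ : ℝ => (1:ℝ)) * fun y : ℝ => rexp (-2⁻¹ * y ^ 2))
        = fun x : ℝ => x ^ 0 * rexp (-2⁻¹ * x ^ 2) := by
      funext x; simp
    rw [e3]
    exact integrable_pow_mul_gauss 0

lemma Gm_rec (n : ℕ) : Gm (n + 2) = ((n:ℝ) + 1) * Gm n := by
  have h := integral_mul_deriv_eq_deriv_mul_of_integrable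
    (u := fun x : ℝ => x ^ (n+1)) (u' := fun x : ℝ => ((n:ℝ)+1) * x ^ n)
    (v := fun y : ℝ => rexp (-2⁻¹ * y ^ 2))
    (v' := fun x : ℝ => -x * rexp (-2⁻¹ * x ^ 2))
    (fun x _ => by simpa using hasDerivAt_pow (n+1) x) (fun x _ => hasDerivAt_gauss x)
    ?_ ?_ ?_
  · have hL : (∫ x : ℝ, x ^ (n+1) * (-x * rexp (-2⁻¹ * x ^ 2))) = -Gm (n+2) := by
      unfold Gm
      rw [← integral_neg]
      congr 1; funext x; ring
    have hR : (∫ x : ℝ, ((n:ℝ)+1) * x ^ n * rexp (-2⁻¹ * x ^ 2)) = ((n:ℝ)+1) * Gm n := by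
      unfold Gm
      rw [← integral_const_mul]
      congr 1; funext x; ring
    rw [hL, hR] at h
    linarith
  · have e1 : ((fun x : ℝ => x ^ (n+1)) * fun x : ℝ => -x * rexp (-2⁻¹ * x ^ 2))
        = fun x : ℝ => -(x ^ (n+2) * rexp (-2⁻¹ * x ^ 2)) := by
      funext x; simp only [Pi.mul_apply]; ring
    rw [e1]
    exact (integrable_pow_mul_gauss (n+2)).neg
  · have e2 : ((fun x : ℝ => ((n:ℝ)+1) * x ^ n) * fun y : ℝ => rexp (-2⁻¹ * y ^ 2))
        = fun x : ℝ => ((n:ℝ)+1) * (x ^ n * rexp (-2⁻¹ * x ^ 2)) := by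
      funext x; simp only [Pi.mul_apply]; ring
    rw [e2]
    exact (integrable_pow_mul_gauss n).const_mul _
  · exact integrable_pow_mul_gauss (n+1)

noncomputable def Mo (n : ℕ) : ℝ := ∫ x : ℝ, x ^ n ∂(gaussianReal 0 1)

lemma pdf_eq (x : ℝ) :
    gaussianPDFReal 0 1 x = (√(2 * π))⁻¹ * rexp (-2⁻¹ * x ^ 2) := by
  unfold gaussianPDFReal
  simp only [NNReal.coe_one, mul_one, sub_zero]
  rw [show -x ^ 2 / 2 = -2⁻¹ * x ^ 2 by ring]

lemma gauss_withDensity :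
    gaussianReal 0 1
      = (volume : Measure ℝ).withDensity fun x => ((gaussianPDFReal 0 1 x).toNNReal : ℝ≥0∞) := by
  rw [gaussianReal_of_var_ne_zero _ one_ne_zero, gaussianPDF_def]
  rfl

lemma integrable_pow_gauss (n : ℕ) :
    Integrable (fun x : ℝ => x ^ n) (gaussianReal 0 1) := by
  rw [gauss_withDensity,
    integrable_withDensity_iff_integrable_smul
      ((measurable_gaussianPDFReal 0 1).real_toNNReal)]
  have e : (fun x : ℝ => ((gaussianPDFReal 0 1 x).toNNReal : ℝ≥0) • (x ^ n : ℝ))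
      = fun x : ℝ => (√(2 * π))⁻¹ * (x ^ n * rexp (-2⁻¹ * x ^ 2)) := by
    funext x
    rw [NNReal.smul_def, smul_eq_mul, Real.coe_toNNReal _ (gaussianPDFReal_nonneg 0 1 x), pdf_eq]
    ring
  rw [e]
  exact (integrable_pow_mul_gauss n).const_mul _

lemma Mo_eq (n : ℕ) : Mo n = (√(2 * π))⁻¹ * Gm n := by
  unfold Mo
  rw [gauss_withDensity,
    integral_withDensity_eq_integral_smul
      ((measurable_gaussianPDFReal 0 1).real_toNNReal)]
  unfold Gm
  rw [← integral_const_mul]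
  congr 1; funext x
  rw [NNReal.smul_def, smul_eq_mul, Real.coe_toNNReal _ (gaussianPDFReal_nonneg 0 1 x), pdf_eq]
  ring

lemma sqrt_two_pi_pos : (0:ℝ) < √(2 * π) := by
  have : (0:ℝ) < 2 * π := by positivity
  exact Real.sqrt_pos.mpr this

lemma Mo_zero : Mo 0 = 1 := by
  rw [Mo_eq, Gm_zero, inv_mul_cancel₀ sqrt_two_pi_pos.ne']

lemma Mo_one : Mo 1 = 0 := by rw [Mo_eq, Gm_one, mul_zero]

lemma Mo_two : Mo 2 = 1 := by
  rw [Mo_eq, show (2:ℕ) = 0 + 2 from rfl, Gm_rec, Gm_zero]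
  push_cast
  rw [zero_add, one_mul, inv_mul_cancel₀ sqrt_two_pi_pos.ne']

lemma Mo_three : Mo 3 = 0 := by
  rw [Mo_eq, show (3:ℕ) = 1 + 2 from rfl, Gm_rec, Gm_one]
  norm_num

lemma Mo_four : Mo 4 = 3 := by
  rw [Mo_eq, show (4:ℕ) = 2 + 2 from rfl, Gm_rec, show Gm 2 = Gm (0 + 2) from rfl, Gm_rec, Gm_zero]
  push_cast
  rw [zero_add, one_mul, show ((2:ℝ)+1) = 3 from by norm_num, mul_comm (3:ℝ), ← mul_assoc,
    inv_mul_cancel₀ sqrt_two_pi_pos.ne', one_mul]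
lemma integral_pi_prod {ι E : Type*} [Fintype ι] [MeasurableSpace E] (μ : Measure E)
    [SigmaFinite μ] (f : ι → E → ℝ) :
    ∫ x : ι → E, (∏ i, f i (x i)) ∂(Measure.pi fun _ => μ) = ∏ i, ∫ x, f i x ∂μ := by
  letI : MeasureSpace E := ⟨μ⟩
  haveI : SigmaFinite (volume : Measure E) := ‹_›
  rw [show (Measure.pi fun _ : ι => μ) = (volume : Measure (ι → E)) from (volume_pi).symm]
  exact MeasureTheory.integral_fintype_prod_eq_prod f

lemma integrable_pi_prod {ι E : Type*} [Fintype ι] [MeasurableSpace E] (μ : Measure E)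
    [SigmaFinite μ] (f : ι → E → ℝ) (hf : ∀ i, Integrable (f i) μ) :
    Integrable (fun x : ι → E => ∏ i, f i (x i)) (Measure.pi fun _ => μ) := by
  letI : MeasureSpace E := ⟨μ⟩
  haveI : SigmaFinite (volume : Measure E) := ‹_›
  rw [show (Measure.pi fun _ : ι => μ) = (volume : Measure (ι → E)) from (volume_pi).symm]
  exact Integrable.fintype_prod hf

section Comb
variable {m k : ℕ}

lemma prodM_pair (i p : Fin m) :
    (∏ r : Fin m, Mo ((if r = i then 1 else 0) + (if r = p then 1 else 0)))
      = if i = p then 1 else 0 := by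
  by_cases h : i = p
  · subst h
    rw [if_pos rfl]
    apply Finset.prod_eq_one
    intro r _
    by_cases hr : r = i <;> simp [hr, Mo_zero, Mo_two]
  · rw [if_neg h]
    exact Finset.prod_eq_zero (Finset.mem_univ i) (by simp [h, Mo_one])

lemma prodM_four (i p q j : Fin m) :
    (∏ r : Fin m, Mo (((if r = i then 1 else 0) + (if r = p then 1 else 0))
        + ((if r = q then 1 else 0) + (if r = j then 1 else 0))))
      = (if i = p then (1:ℝ) else 0) * (if q = j then 1 else 0)
        + (if i = q then 1 else 0) * (if p = j then 1 else 0)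
        + (if i = j then 1 else 0) * (if p = q then 1 else 0) := by
  by_cases hip : i = p <;> by_cases hqj : q = j
  · subst hip; subst hqj
    by_cases hiq : i = q
    · subst hiq
      rw [Finset.prod_eq_single i (fun r _ hr => by simp [hr, Mo_zero])
        (fun h => absurd (Finset.mem_univ i) h)]
      simp [Mo_four]
      norm_num
    · have h1 : (∏ r : Fin m, Mo (((if r = i then 1 else 0) + (if r = i then 1 else 0))
          + ((if r = q then 1 else 0) + (if r = q then 1 else 0)))) = 1 := by
        apply Finset.prod_eq_one
        intro r _
        rcases eq_or_ne r i with h1 | h1 <;> rcases eq_or_ne r q with h2 | h2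
        · exact absurd (h1.symm.trans h2) hiq
        · simp [h1, h2, hiq, Ne.symm hiq, Mo_two]
        · simp [h1, h2, hiq, Ne.symm hiq, Mo_two]
        · simp [h1, h2, Mo_zero]
      rw [h1]
      simp [hiq]
  · subst hip
    have h1 : (∏ r : Fin m, Mo (((if r = i then 1 else 0) + (if r = i then 1 else 0))
        + ((if r = q then 1 else 0) + (if r = j then 1 else 0)))) = 0 := by
      apply Finset.prod_eq_zero (Finset.mem_univ q)
      by_cases hqi : q = i
      · have hij : ¬ i = j := fun h => hqj (hqi.trans h)
        simp [hqi, hij, Mo_three]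
      · simp [hqi, hqj, Mo_one]
    rw [h1]
    by_cases hiq : i = q <;> by_cases hij : i = j
    · exact absurd (hiq.symm.trans hij) hqj
    · simp [hqj, hij]
    · simp [hqj, hiq]
    · simp [hqj, hiq]
  · subst hqj
    have h1 : (∏ r : Fin m, Mo (((if r = i then 1 else 0) + (if r = p then 1 else 0))
        + ((if r = q then 1 else 0) + (if r = q then 1 else 0)))) = 0 := by
      apply Finset.prod_eq_zero (Finset.mem_univ i)
      by_cases hiq : i = q
      · have hqp : ¬ q = p := fun h => hip (hiq.trans h)
        simp [hiq, hqp, Mo_three]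
      · simp [hip, hiq, Mo_one]
    rw [h1]
    by_cases hiq : i = q <;> by_cases hpq : p = q
    · exact absurd (hiq.trans hpq.symm) hip
    · simp [hip, hpq]
    · simp [hip, hiq]
    · simp [hip, hiq]
  · by_cases hiq : i = q
    · subst hiq
      have hij : ¬ i = j := hqj
      by_cases hpj : p = j
      · subst hpj
        have h1 : (∏ r : Fin m, Mo (((if r = i then 1 else 0) + (if r = p then 1 else 0))
            + ((if r = i then 1 else 0) + (if r = p then 1 else 0)))) = 1 := by
          apply Finset.prod_eq_one
          intro r _
          rcases eq_or_ne r i with h1 | h1 <;> rcases eq_or_ne r p with h2 | h2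
          · exact absurd (h1.symm.trans h2) hip
          · simp [h1, h2, hip, Ne.symm hip, Mo_two]
          · simp [h1, h2, hip, Ne.symm hip, Mo_two]
          · simp [h1, h2, Mo_zero]
        rw [h1]
        simp [hip, hij]
      · have hpi : ¬ p = i := fun h => hip h.symm
        have h1 : (∏ r : Fin m, Mo (((if r = i then 1 else 0) + (if r = p then 1 else 0))
            + ((if r = i then 1 else 0) + (if r = j then 1 else 0)))) = 0 := by
          apply Finset.prod_eq_zero (Finset.mem_univ p)
          simp [hpi, hpj, Mo_one]
        rw [h1]
        simp [hip, hpj, hij]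
    · by_cases hij : i = j
      · subst hij
        have hqi : ¬ q = i := fun h => hiq h.symm
        by_cases hpq : p = q
        · subst hpq
          have h1 : (∏ r : Fin m, Mo (((if r = i then 1 else 0) + (if r = p then 1 else 0))
              + ((if r = p then 1 else 0) + (if r = i then 1 else 0)))) = 1 := by
            apply Finset.prod_eq_one
            intro r _
            rcases eq_or_ne r i with h1 | h1 <;> rcases eq_or_ne r p with h2 | h2
            · exact absurd (h1.symm.trans h2) hip
            · simp [h1, h2, hip, Ne.symm hip, Mo_two]
            · simp [h1, h2, hip, Ne.symm hip, Mo_two]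
            · simp [h1, h2, Mo_zero]
          rw [h1]
          simp [hip, hiq]
        · have hpi : ¬ p = i := fun h => hip h.symm
          have hqi' : ¬ q = i := hqi
          have h1 : (∏ r : Fin m, Mo (((if r = i then 1 else 0) + (if r = p then 1 else 0))
              + ((if r = q then 1 else 0) + (if r = i then 1 else 0)))) = 0 := by
            apply Finset.prod_eq_zero (Finset.mem_univ p)
            simp [hpi, hpq, Mo_one]
          rw [h1]
          simp [hip, hiq, hpq]
      · have h1 : (∏ r : Fin m, Mo (((if r = i then 1 else 0) + (if r = p then 1 else 0))
            + ((if r = q then 1 else 0) + (if r = j then 1 else 0)))) = 0 := by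
          apply Finset.prod_eq_zero (Finset.mem_univ i)
          simp [hip, hiq, hij, Mo_one]
        rw [h1]
        simp [hqj, hiq, hij]

end Comb

section Mat
variable {m k : ℕ}

noncomputable abbrev muA (m k : ℕ) : Measure (Fin m → Fin k → ℝ) :=
  Measure.pi fun _ : Fin m => Measure.pi fun _ : Fin k => gaussianReal 0 1

lemma matrix_moment (g : Fin m → Fin k → ℕ) :
    ∫ Q : Fin m → Fin k → ℝ, (∏ r, ∏ c, (Q r c) ^ (g r c)) ∂(muA m k)
      = ∏ r, ∏ c, Mo (g r c) := by
  rw [integral_pi_prod (Measure.pi fun _ : Fin k => gaussianReal 0 1)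
    (fun r y => ∏ c, y c ^ g r c)]
  refine Finset.prod_congr rfl fun r _ => ?_
  rw [integral_pi_prod (gaussianReal 0 1) (fun c x => x ^ g r c)]
  exact Finset.prod_congr rfl fun c _ => rfl

lemma matrix_integrable (g : Fin m → Fin k → ℕ) :
    Integrable (fun Q : Fin m → Fin k → ℝ => ∏ r, ∏ c, (Q r c) ^ (g r c)) (muA m k) := by
  exact integrable_pi_prod (Measure.pi fun _ : Fin k => gaussianReal 0 1)
    (fun r y => ∏ c, y c ^ g r c)
    (fun r => integrable_pi_prod (gaussianReal 0 1) (fun c x => x ^ g r c)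
      (fun c => integrable_pow_gauss (g r c)))

lemma repr1 (Q : Fin m → Fin k → ℝ) (i : Fin m) (a : Fin k) :
    Q i a = ∏ r, ∏ c, Q r c ^ (if c = a then (if r = i then 1 else 0) else 0) := by
  have h : ∀ r : Fin m, (∏ c, Q r c ^ (if c = a then (if r = i then 1 else 0) else 0))
      = if r = i then Q r a else 1 := by
    intro r
    have h2 : ∀ c : Fin k, Q r c ^ (if c = a then (if r = i then 1 else 0) else 0)
        = if c = a then (if r = i then Q r c else 1) else 1 := by
      intro c
      by_cases hc : c = a <;> by_cases hr : r = i <;> simp [hc, hr]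
    rw [Finset.prod_congr rfl fun c _ => h2 c,
      Finset.prod_ite_eq' Finset.univ a (fun c => if r = i then Q r c else 1)]
    simp
  rw [Finset.prod_congr rfl fun r _ => h r]
  simp [Finset.prod_ite_eq']

def Ee (i : Fin m) (a : Fin k) (p : Fin m) (q : Fin m) (j : Fin m) (b : Fin k)
    (r : Fin m) (c : Fin k) : ℕ :=
  (if c = a then ((if r = i then 1 else 0) + (if r = p then 1 else 0)) else 0)
    + (if c = b then ((if r = q then 1 else 0) + (if r = j then 1 else 0)) else 0)

lemma repr4 (Q : Fin m → Fin k → ℝ) (i p q j : Fin m) (a b : Fin k) :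
    Q i a * Q p a * Q q b * Q j b = ∏ r, ∏ c, Q r c ^ (Ee i a p q j b r c) := by
  have e : ∀ (r : Fin m) (c : Fin k), Q r c ^ (Ee i a p q j b r c)
      = Q r c ^ (if c = a then (if r = i then 1 else 0) else 0)
        * Q r c ^ (if c = a then (if r = p then 1 else 0) else 0)
        * Q r c ^ (if c = b then (if r = q then 1 else 0) else 0)
        * Q r c ^ (if c = b then (if r = j then 1 else 0) else 0) := by
    intro r c
    rw [← pow_add, ← pow_add, ← pow_add]
    congr 1
    unfold Ee
    by_cases h1 : c = a <;> by_cases h2 : c = b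
    · have hab : a = b := h1.symm.trans h2
      simp [h1, h2, hab]
      ring
    · have hab : ¬ a = b := fun h => h2 (h1.trans h)
      simp [h1, h2, hab]
    · have hba : ¬ b = a := fun h => h1 (h2.trans h)
      simp [h1, h2, hba]
    · simp [h1, h2]
  calc Q i a * Q p a * Q q b * Q j b
      = (∏ r, ∏ c, Q r c ^ (if c = a then (if r = i then 1 else 0) else 0))
        * (∏ r, ∏ c, Q r c ^ (if c = a then (if r = p then 1 else 0) else 0))
        * (∏ r, ∏ c, Q r c ^ (if c = b then (if r = q then 1 else 0) else 0))
        * (∏ r, ∏ c, Q r c ^ (if c = b then (if r = j then 1 else 0) else 0)) := by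
        rw [← repr1, ← repr1, ← repr1, ← repr1]
    _ = ∏ r, ∏ c, Q r c ^ (Ee i a p q j b r c) := by
        simp only [← Finset.prod_mul_distrib]
        exact Finset.prod_congr rfl fun r _ => Finset.prod_congr rfl fun c _ => (e r c).symm

lemma E4 (i p q j : Fin m) (a b : Fin k) :
    ∫ Q : Fin m → Fin k → ℝ, Q i a * Q p a * Q q b * Q j b ∂(muA m k)
      = (if i = p then (1:ℝ) else 0) * (if q = j then 1 else 0)
        + (if a = b then
            ((if i = q then (1:ℝ) else 0) * (if p = j then 1 else 0)
              + (if i = j then 1 else 0) * (if p = q then 1 else 0))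
          else 0) := by
  rw [show (fun Q : Fin m → Fin k → ℝ => Q i a * Q p a * Q q b * Q j b)
      = fun Q => ∏ r, ∏ c, Q r c ^ (Ee i a p q j b r c) from funext fun Q => repr4 Q i p q j a b,
    matrix_moment]
  by_cases hab : a = b
  · subst hab
    rw [if_pos rfl]
    have h : ∀ r : Fin m, (∏ c, Mo (Ee i a p q j a r c))
        = Mo (((if r = i then 1 else 0) + (if r = p then 1 else 0))
            + ((if r = q then 1 else 0) + (if r = j then 1 else 0))) := by
      intro r
      rw [Finset.prod_eq_single a (fun c _ hc => by simp [Ee, hc, Mo_zero])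
        (fun h => absurd (Finset.mem_univ a) h)]
      simp [Ee]
    rw [Finset.prod_congr rfl fun r _ => h r, prodM_four]
    ring
  · rw [if_neg hab]
    have hba : ¬ b = a := fun h => hab h.symm
    have h : ∀ r : Fin m, (∏ c, Mo (Ee i a p q j b r c))
        = Mo ((if r = i then 1 else 0) + (if r = p then 1 else 0))
          * Mo ((if r = q then 1 else 0) + (if r = j then 1 else 0)) := by
      intro r
      rw [← Finset.prod_subset (Finset.subset_univ ({a, b} : Finset (Fin k)))
        (fun c _ hc => ?_)]
      · rw [Finset.prod_pair hab]
        simp [Ee, hab, hba]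
      · simp only [Finset.mem_insert, Finset.mem_singleton, not_or] at hc
        simp [Ee, hc.1, hc.2, Mo_zero]
    rw [Finset.prod_congr rfl fun r _ => h r, Finset.prod_mul_distrib,
      prodM_pair, prodM_pair]
    ring

end Mat
/-- For a random `m × k` matrix `Q` with i.i.d. standard normal entries and a
symmetric `m × m` matrix `A`, `E[Q Qᵀ A Q Qᵀ] = k(k+1)·A + k·(tr A)·I`. -/
theorem gaussian_expectation (m k : ℕ) (hm : 1 ≤ m) (hk : 1 ≤ k)
    (A : Matrix (Fin m) (Fin m) ℝ) (hA : A.IsSymm) :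
    (Matrix.of fun i j => ∫ Q,
        ((Matrix.of Q) * (Matrix.of Q)ᵀ * A * ((Matrix.of Q) * (Matrix.of Q)ᵀ)) i j
          ∂(Measure.pi fun _ : Fin m => Measure.pi fun _ : Fin k => gaussianReal 0 1)) =
      ((k : ℝ) * ((k : ℝ) + 1)) • A +
        ((k : ℝ) * Matrix.trace A) • (1 : Matrix (Fin m) (Fin m) ℝ) := by
  ext i j
  rw [Matrix.of_apply]
  have expand : ∀ Q : Fin m → Fin k → ℝ,
      ((Matrix.of Q) * (Matrix.of Q)ᵀ * A * ((Matrix.of Q) * (Matrix.of Q)ᵀ)) i j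
      = ∑ p, ∑ q, ∑ a, ∑ b, A p q * (Q i a * Q p a * Q q b * Q j b) := by
    intro Q
    simp only [Matrix.mul_apply, Matrix.transpose_apply, Matrix.of_apply, Finset.sum_mul,
      Finset.mul_sum]
    trans (∑ q : Fin m, ∑ p : Fin m, ∑ b : Fin k, ∑ a : Fin k,
      Q i a * Q p a * A p q * (Q q b * Q j b))
    · exact Finset.sum_congr rfl fun q _ => Finset.sum_comm
    trans (∑ p : Fin m, ∑ q : Fin m, ∑ b : Fin k, ∑ a : Fin k,
      Q i a * Q p a * A p q * (Q q b * Q j b))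
    · exact Finset.sum_comm
    refine Finset.sum_congr rfl fun p _ => Finset.sum_congr rfl fun q _ => ?_
    rw [Finset.sum_comm]
    exact Finset.sum_congr rfl fun a _ => Finset.sum_congr rfl fun b _ => by ring
  simp only [expand]
  have hint : ∀ (p q : Fin m) (a b : Fin k),
      Integrable (fun Q : Fin m → Fin k → ℝ => A p q * (Q i a * Q p a * Q q b * Q j b))
        (muA m k) := by
    intro p q a b
    have h := (matrix_integrable (Ee i a p q j b)).const_mul (A p q)
    refine h.congr (Filter.Eventually.of_forall fun Q => ?_)
    show A p q * (∏ r, ∏ c, Q r c ^ Ee i a p q j b r c)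
        = A p q * (Q i a * Q p a * Q q b * Q j b)
    rw [← repr4 Q i p q j a b]
  rw [integral_finset_sum _ (fun p _ => integrable_finset_sum _ fun q _ =>
    integrable_finset_sum _ fun a _ => integrable_finset_sum _ fun b _ => hint p q a b)]
  have step : ∀ p : Fin m, (∫ Q : Fin m → Fin k → ℝ,
        (∑ q, ∑ a, ∑ b, A p q * (Q i a * Q p a * Q q b * Q j b)) ∂(muA m k))
      = ∑ q : Fin m, ∑ a : Fin k, ∑ b : Fin k, A p q *
          ((if i = p then (1:ℝ) else 0) * (if q = j then 1 else 0)
            + (if a = b then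
                ((if i = q then (1:ℝ) else 0) * (if p = j then 1 else 0)
                  + (if i = j then 1 else 0) * (if p = q then 1 else 0))
              else 0)) := by
    intro p
    rw [integral_finset_sum _ (fun q _ => integrable_finset_sum _ fun a _ =>
      integrable_finset_sum _ fun b _ => hint p q a b)]
    refine Finset.sum_congr rfl fun q _ => ?_
    rw [integral_finset_sum _ (fun a _ => integrable_finset_sum _ fun b _ => hint p q a b)]
    refine Finset.sum_congr rfl fun a _ => ?_
    rw [integral_finset_sum _ (fun b _ => hint p q a b)]
    refine Finset.sum_congr rfl fun b _ => ?_
    rw [integral_const_mul, E4 i p q j a b]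
  rw [Finset.sum_congr rfl fun p _ => step p]
  have hinner : ∀ p q : Fin m, (∑ a : Fin k, ∑ b : Fin k, A p q *
          ((if i = p then (1:ℝ) else 0) * (if q = j then 1 else 0)
            + (if a = b then
                ((if i = q then (1:ℝ) else 0) * (if p = j then 1 else 0)
                  + (if i = j then 1 else 0) * (if p = q then 1 else 0))
              else 0)))
      = (k:ℝ)^2 * (A p q * ((if i = p then (1:ℝ) else 0) * (if q = j then 1 else 0)))
        + (k:ℝ) * (A p q * ((if i = q then (1:ℝ) else 0) * (if p = j then 1 else 0)
            + (if i = j then 1 else 0) * (if p = q then 1 else 0))) := by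
    intro p q
    simp only [mul_add, Finset.sum_add_distrib, mul_ite, mul_zero, Finset.sum_ite_eq,
      Finset.mem_univ, if_true, Finset.sum_const, Finset.card_univ, Fintype.card_fin,
      nsmul_eq_mul]
    ring
  rw [Finset.sum_congr rfl fun p _ => Finset.sum_congr rfl fun q _ => hinner p q]
  have e1 : (∑ p : Fin m, ∑ q : Fin m,
      A p q * ((if i = p then (1:ℝ) else 0) * (if q = j then 1 else 0))) = A i j := by
    simp [mul_ite, ite_mul, Finset.sum_ite_eq, Finset.sum_ite_eq']
  have e2 : (∑ p : Fin m, ∑ q : Fin m,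
      A p q * ((if i = q then (1:ℝ) else 0) * (if p = j then 1 else 0))) = A j i := by
    simp [mul_ite, ite_mul, Finset.sum_ite_eq, Finset.sum_ite_eq']
  have e3 : (∑ p : Fin m, ∑ q : Fin m,
      A p q * ((if i = j then (1:ℝ) else 0) * (if p = q then 1 else 0)))
      = (if i = j then (1:ℝ) else 0) * Matrix.trace A := by
    rw [Matrix.trace, Finset.mul_sum]
    refine Finset.sum_congr rfl fun p _ => ?_
    simp [mul_ite, ite_mul, Finset.sum_ite_eq, Finset.sum_ite_eq', Matrix.diag]
  have hsplit : (∑ p : Fin m, ∑ q : Fin m,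
      ((k:ℝ)^2 * (A p q * ((if i = p then (1:ℝ) else 0) * (if q = j then 1 else 0)))
        + (k:ℝ) * (A p q * ((if i = q then (1:ℝ) else 0) * (if p = j then 1 else 0)
            + (if i = j then 1 else 0) * (if p = q then 1 else 0)))))
      = (k:ℝ)^2 * A i j + (k:ℝ) * (A j i + (if i = j then (1:ℝ) else 0) * Matrix.trace A) := by
    rw [← e1, ← e2, ← e3]
    simp only [mul_add, Finset.mul_sum, Finset.sum_add_distrib]
  rw [hsplit, hA.apply i j]
  simp only [Matrix.add_apply, Matrix.smul_apply, smul_eq_mul, Matrix.one_apply]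
  ring
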